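/- Let G = ⟨ξ, η⟩ with ξ = re^{iα}, η = Re^{iβ} be a dense multiplicative subgroup of ℂ* of the second type. Then for any z₁, z₂ ∈ ℂ \ {0} there exists a sequence of integer pairs (n_k, m_k) such that z₁ξ^{n_k}/(z₂η^{m_k}) → 1, e^{i n_k α} → e^{−i arg(z₁)}, and e^{i m_k β} → e^{−i arg(z₂)} as k → ∞. -/

import Mathlib

open Complex Filter

noncomputable section

/-- `ξ, η` generate a dense subgroup of `ℂ*`. -/
def DensePair (ξ η : ℂ) : Prop :=
  Dense {z : ℂ | ∃ n m : ℤ, z = ξ ^ n * η ^ m}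

/-- `H_G = S¹`: every point of the unit circle is a limit of `(ξ/|ξ|)^{n_k}` along
integer sequences `(n_k, m_k)` with `ξ^{n_k} η^{m_k} → 1`. -/
def SecondType (ξ η : ℂ) : Prop :=
  ∀ z : ℂ, ‖z‖ = 1 → ∀ ε : ℝ, 0 < ε →
    ∃ n m : ℤ, ‖ξ ^ n * η ^ m - 1‖ < ε ∧
      ‖(ξ / (‖ξ‖ : ℂ)) ^ n - z‖ < ε

/-- `exp (-(arg w) I) = |w| / w` for `w ≠ 0`. -/
lemma stmt13_aux_arg (w : ℂ) (hw : w ≠ 0) :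
    Complex.exp (-(Complex.arg w) * I) = (‖w‖ : ℂ) / w := by
  have h := Complex.norm_mul_exp_arg_mul_I w
  rw [eq_div_iff hw]
  calc Complex.exp (-(Complex.arg w) * I) * w
      = Complex.exp (-(Complex.arg w) * I) *
        ((‖w‖ : ℂ) * Complex.exp (Complex.arg w * I)) := by rw [h]
    _ = (‖w‖ : ℂ) * Complex.exp (-(Complex.arg w) * I + Complex.arg w * I) := by
        rw [Complex.exp_add]; ring
    _ = (‖w‖ : ℂ) := by
        rw [show -(Complex.arg w : ℂ) * I + (Complex.arg w : ℂ) * I = 0 by ring,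
          Complex.exp_zero, mul_one]

theorem stmt_13 (r R α β : ℝ) (hr : 0 < r) (hR : 0 < R)
    (ξ η : ℂ) (hξ : ξ = r * Complex.exp (α * Complex.I))
    (hη : η = R * Complex.exp (β * Complex.I))
    (hdense : DensePair ξ η) (hsecond : SecondType ξ η)
    (z₁ z₂ : ℂ) (hz₁ : z₁ ≠ 0) (hz₂ : z₂ ≠ 0) :
    ∃ n m : ℕ → ℤ,
      Tendsto (fun k => z₁ * ξ ^ n k / (z₂ * η ^ m k)) atTop (nhds 1) ∧
      Tendsto (fun k => Complex.exp ((n k : ℂ) * α * Complex.I)) atTop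
        (nhds (Complex.exp (-(Complex.arg z₁) * Complex.I))) ∧
      Tendsto (fun k => Complex.exp ((m k : ℂ) * β * Complex.I)) atTop
        (nhds (Complex.exp (-(Complex.arg z₂) * Complex.I))) := by
  have hr0 : (r : ℂ) ≠ 0 := by exact_mod_cast hr.ne'
  have hR0 : (R : ℂ) ≠ 0 := by exact_mod_cast hR.ne'
  have hξ0 : ξ ≠ 0 := by rw [hξ]; exact mul_ne_zero hr0 (Complex.exp_ne_zero _)
  have hη0 : η ≠ 0 := by rw [hη]; exact mul_ne_zero hR0 (Complex.exp_ne_zero _)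
  have habsξ : ‖ξ‖ = r := by
    rw [hξ]; simp [norm_mul, Complex.norm_exp, abs_of_pos hr]
  have habsη : ‖η‖ = R := by
    rw [hη]; simp [norm_mul, Complex.norm_exp, abs_of_pos hR]
  -- powers of ξ, η
  have hξpow : ∀ n : ℤ, ξ ^ n = (r : ℂ) ^ n * Complex.exp ((n : ℂ) * α * I) := by
    intro n
    rw [hξ, mul_zpow, ← Complex.exp_int_mul, mul_assoc]
  have hηpow : ∀ M : ℤ, η ^ M = (R : ℂ) ^ M * Complex.exp ((M : ℂ) * β * I) := by
    intro M
    rw [hη, mul_zpow, ← Complex.exp_int_mul, mul_assoc]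
  have habsP : ∀ n M : ℤ, (‖ξ ^ n * η ^ M‖ : ℂ) = (r : ℂ) ^ n * (R : ℂ) ^ M := by
    intro n M
    rw [norm_mul, norm_zpow, norm_zpow, habsξ, habsη]
    push_cast
    ring
  have hP0 : ∀ n M : ℤ, ξ ^ n * η ^ M ≠ 0 :=
    fun n M => mul_ne_zero (zpow_ne_zero _ hξ0) (zpow_ne_zero _ hη0)
  -- key algebraic identity
  have hkey : ∀ n M : ℤ, Complex.exp (((-M : ℤ) : ℂ) * β * I) =
      (‖ξ ^ n * η ^ M‖ : ℂ) / (ξ ^ n * η ^ M) * Complex.exp ((n : ℂ) * α * I) := by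
    intro n M
    rw [div_mul_eq_mul_div, eq_div_iff (hP0 n M), habsP, hξpow n, hηpow M]
    push_cast
    calc Complex.exp (-(M : ℂ) * β * I) *
          ((r : ℂ) ^ n * Complex.exp ((n : ℂ) * α * I) *
            ((R : ℂ) ^ M * Complex.exp ((M : ℂ) * β * I)))
        = (r : ℂ) ^ n * (R : ℂ) ^ M * Complex.exp ((n : ℂ) * α * I) *
            (Complex.exp (-(M : ℂ) * β * I) * Complex.exp ((M : ℂ) * β * I)) := by ring
      _ = (r : ℂ) ^ n * (R : ℂ) ^ M * Complex.exp ((n : ℂ) * α * I) := by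
          rw [← Complex.exp_add, show -(M : ℂ) * β * I + (M : ℂ) * β * I = 0 by ring,
            Complex.exp_zero, mul_one]
  set c : ℂ := z₂ / z₁ with hc
  have hc0 : c ≠ 0 := div_ne_zero hz₂ hz₁
  set u : ℂ := (‖z₁‖ : ℂ) / z₁ with hu
  have habsz₁ : ‖z₁‖ ≠ 0 := by simpa using hz₁
  have habsu : ‖u‖ = 1 := by
    rw [hu, norm_div, Complex.norm_real, norm_norm,
      div_self habsz₁]
  have hunit : ξ / (‖ξ‖ : ℂ) = Complex.exp ((α : ℂ) * I) := by
    rw [habsξ, hξ, mul_comm, mul_div_assoc, div_self hr0, mul_one]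
  -- main approximation step
  have hstep : ∀ ε : ℝ, 0 < ε → ∃ n M : ℤ,
      ‖ξ ^ n * η ^ M - c‖ < ε ∧
      ‖Complex.exp ((n : ℂ) * α * I) - u‖ < ε := by
    intro ε hε
    set δ : ℝ := min ε 1 / (‖c‖ + 2) with hδ
    have hδ0 : 0 < δ := by positivity
    have hδmul : δ * (‖c‖ + 2) = min ε 1 := by
      rw [hδ]; field_simp
    have hδ1 : δ ≤ 1 := by
      nlinarith [norm_nonneg c, min_le_right ε 1]
    have hδε : δ * (‖c‖ + δ) + δ ≤ ε := by
      nlinarith [norm_nonneg c, min_le_left ε 1, hδ0.le]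
    -- density step
    obtain ⟨b, hbS, hbd⟩ := Metric.mem_closure_iff.mp (hdense c) δ hδ0
    obtain ⟨n₀, m₀, hb⟩ := hbS
    have hA : ‖ξ ^ n₀ * η ^ m₀ - c‖ < δ := by
      rw [← hb, ← Complex.dist_eq, dist_comm]; exact hbd
    set w₀ : ℂ := Complex.exp ((n₀ : ℂ) * α * I) with hw₀
    have habsw₀ : ‖w₀‖ = 1 := by
      rw [hw₀]; simp [Complex.norm_exp]
    have hw₀0 : w₀ ≠ 0 := Complex.exp_ne_zero _
    have habsz : ‖u * w₀⁻¹‖ = 1 := by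
      rw [norm_mul, norm_inv, habsu, habsw₀]; norm_num
    obtain ⟨n₁, m₁, hB, hC⟩ := hsecond (u * w₀⁻¹) habsz δ hδ0
    have hC' : ‖Complex.exp ((n₁ : ℂ) * α * I) - u * w₀⁻¹‖ < δ := by
      rwa [hunit, ← Complex.exp_int_mul, ← mul_assoc] at hC
    refine ⟨n₀ + n₁, m₀ + m₁, ?_, ?_⟩
    · have hsplit : ξ ^ (n₀ + n₁) * η ^ (m₀ + m₁) =
          (ξ ^ n₀ * η ^ m₀) * (ξ ^ n₁ * η ^ m₁) := by
        rw [zpow_add₀ hξ0, zpow_add₀ hη0]; ring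
      set A := ξ ^ n₀ * η ^ m₀
      set B := ξ ^ n₁ * η ^ m₁
      have habsA : ‖A‖ ≤ ‖c‖ + δ := by
        calc ‖A‖ = ‖c + (A - c)‖ := by ring_nf
          _ ≤ ‖c‖ + ‖A - c‖ := norm_add_le _ _
          _ ≤ ‖c‖ + δ := by linarith
      have htri : ‖A * B - c‖ ≤ ‖A‖ * ‖B - 1‖ +
          ‖A - c‖ := by
        calc ‖A * B - c‖ = ‖A * (B - 1) + (A - c)‖ := by ring_nf
          _ ≤ ‖A * (B - 1)‖ + ‖A - c‖ := norm_add_le _ _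
          _ = ‖A‖ * ‖B - 1‖ + ‖A - c‖ := by rw [norm_mul]
      rw [hsplit]
      have h1 : ‖A‖ * ‖B - 1‖ ≤ (‖c‖ + δ) * δ := by
        have := norm_nonneg (B - 1)
        nlinarith [norm_nonneg A]
      nlinarith
    · have hsplit : Complex.exp (((n₀ + n₁ : ℤ) : ℂ) * α * I) =
          w₀ * Complex.exp ((n₁ : ℂ) * α * I) := by
        rw [hw₀, ← Complex.exp_add]; congr 1; push_cast; ring
      rw [hsplit]
      have : w₀ * Complex.exp ((n₁ : ℂ) * α * I) - u =
          w₀ * (Complex.exp ((n₁ : ℂ) * α * I) - u * w₀⁻¹) := by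
        field_simp
      rw [this, norm_mul, habsw₀, one_mul]
      have hδleε : δ ≤ ε := by nlinarith [norm_nonneg c, hδ0.le]
      linarith
  -- choose the sequences
  have hex : ∀ k : ℕ, ∃ n M : ℤ,
      ‖ξ ^ n * η ^ M - c‖ < 1 / ((k : ℝ) + 1) ∧
      ‖Complex.exp ((n : ℂ) * α * I) - u‖ < 1 / ((k : ℝ) + 1) :=
    fun k => hstep (1 / ((k : ℝ) + 1)) (by positivity)
  choose N Mf hN hMu using hex
  have hlim0 : Tendsto (fun k : ℕ => 1 / ((k : ℝ) + 1)) atTop (nhds 0) :=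
    tendsto_one_div_add_atTop_nhds_zero_nat
  have htend1 : Tendsto (fun k => ξ ^ N k * η ^ Mf k) atTop (nhds c) := by
    rw [tendsto_iff_norm_sub_tendsto_zero]
    exact squeeze_zero (fun k => norm_nonneg _)
      (fun k => by exact (hN k).le) hlim0
  have htend2 : Tendsto (fun k => Complex.exp ((N k : ℂ) * α * I)) atTop (nhds u) := by
    rw [tendsto_iff_norm_sub_tendsto_zero]
    exact squeeze_zero (fun k => norm_nonneg _)
      (fun k => by exact (hMu k).le) hlim0
  refine ⟨N, fun k => -(Mf k), ?_, ?_, ?_⟩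
  · have heq : ∀ k, z₁ * ξ ^ N k / (z₂ * η ^ (-(Mf k))) =
        (z₁ / z₂) * (ξ ^ N k * η ^ Mf k) := by
      intro k
      rw [zpow_neg]
      field_simp
    have h := htend1.const_mul (z₁ / z₂)
    rw [show z₁ / z₂ * c = 1 by rw [hc]; field_simp] at h
    exact Tendsto.congr (fun k => (heq k).symm) h
  · rw [stmt13_aux_arg z₁ hz₁]
    exact htend2
  · have heq : ∀ k : ℕ, Complex.exp (((-(Mf k) : ℤ) : ℂ) * β * I) =
        (‖ξ ^ N k * η ^ Mf k‖ : ℂ) / (ξ ^ N k * η ^ Mf k) *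
          Complex.exp ((N k : ℂ) * α * I) :=
      fun k => hkey (N k) (Mf k)
    have habs_tend : Tendsto (fun k => (‖ξ ^ N k * η ^ Mf k‖ : ℂ)) atTop
        (nhds ((‖c‖ : ℂ))) :=
      (Complex.continuous_ofReal.tendsto _).comp
        ((continuous_norm.tendsto c).comp htend1)
    have hmain : Tendsto (fun k => (‖ξ ^ N k * η ^ Mf k‖ : ℂ) /
        (ξ ^ N k * η ^ Mf k) * Complex.exp ((N k : ℂ) * α * I)) atTop
        (nhds ((‖c‖ : ℂ) / c * u)) :=
      (habs_tend.div htend1 hc0).mul htend2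
    have hfinal : (‖c‖ : ℂ) / c * u = Complex.exp (-(Complex.arg z₂) * I) := by
      rw [stmt13_aux_arg z₂ hz₂, hc, hu, norm_div]
      push_cast
      have h1 : (‖z₁‖ : ℂ) ≠ 0 := by exact_mod_cast habsz₁
      field_simp
    rw [← hfinal]
    exact Tendsto.congr (fun k => (heq k).symm) hmain

end
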